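/- For all nonnegative integers n, Σ_{j ∈ ℤ} (-1)^j b_6(n - j(3j-1)/2) equals (-1)^k if n = 3k(3k-1) for some integer k, and equals 0 otherwise; here b_6(x) = 0 for x negative. -/

import Mathlib

open Finset

/-- Number of 6-regular partitions of `n` (no part divisible by 6). -/
def b6 (n : ℕ) : ℕ := Fintype.card {P : Nat.Partition n // ∀ i ∈ P.parts, ¬ (6 ∣ i)}

/-- `b6` extended to integers, `0` on negatives. -/
def b6z (x : ℤ) : ℤ := if 0 ≤ x then b6 x.toNat else 0

namespace Aux6

/-- pentagonal number as integer -/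
def pt (j : ℤ) : ℤ := j * (3 * j - 1) / 2

lemma two_pt (j : ℤ) : 2 * pt j = j * (3 * j - 1) := by
  have h : (2:ℤ) ∣ j * (3*j-1) := by
    rcases Int.even_or_odd j with ⟨m, hm⟩ | ⟨m, hm⟩
    · exact ⟨m * (3*j-1), by rw [hm]; ring⟩
    · exact ⟨j * (3*m+1), by rw [hm]; ring⟩
  exact Int.mul_ediv_cancel' h

lemma pt_nonneg (j : ℤ) : 0 ≤ pt j := by
  have h := two_pt j
  rcases lt_trichotomy j 0 with hj | hj | hj
  · have h2 : (0:ℤ) < 3 * j - 1 → False := by omega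
    have := mul_pos_of_neg_of_neg hj (by omega : 3 * j - 1 < 0)
    omega
  · subst hj; simp at h; omega
  · have := mul_pos hj (by omega : (0:ℤ) < 3 * j - 1)
    omega

lemma natAbs_le_pt (j : ℤ) : (j.natAbs : ℤ) ≤ pt j := by
  have h := two_pt j
  rcases le_or_gt 0 j with hj | hj
  · rw [Int.natAbs_of_nonneg hj]
    have : 0 ≤ j * (j - 1) := by
      rcases eq_or_lt_of_le hj with hj' | hj'
      · rw [← hj']; ring_nf; simp
      · exact mul_nonneg hj (by omega)
    nlinarith
  · have hna : (j.natAbs : ℤ) = -j := by omega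
    rw [hna]
    have : 0 < j * (3 * j + 1) := mul_pos_of_neg_of_neg hj (by omega)
    nlinarith

lemma pt_add_one (j : ℤ) : pt (j + 1) = pt j + 3 * j + 1 := by
  have h1 := two_pt j; have h2 := two_pt (j + 1)
  have : 2 * pt (j+1) = 2 * (pt j + 3 * j + 1) := by rw [h2]; nlinarith
  omega

lemma pt_sub_one (j : ℤ) : pt (j - 1) = pt j - 3 * j + 2 := by
  have := pt_add_one (j - 1)
  have h : j - 1 + 1 = j := by ring
  rw [h] at this; omega

lemma pt_inj {j k : ℤ} (h : pt j = pt k) : j = k := by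
  have h1 := two_pt j; have h2 := two_pt k
  have : j * (3*j-1) = k * (3*k-1) := by omega
  have h3 : (j - k) * (3*(j+k) - 1) = 0 := by nlinarith
  rcases mul_eq_zero.1 h3 with h4 | h4
  · omega
  · omega

/-- the sign (-1)^|j| -/
def sg (j : ℤ) : ℤ := (-1) ^ j.natAbs

lemma sg_eq (j : ℤ) : sg j = if Even j then 1 else -1 := by
  unfold sg
  rcases Int.even_or_odd j with h | h
  · rw [if_pos h]; exact Even.neg_one_pow (Int.natAbs_even.2 h)
  · rw [if_neg (Int.not_even_iff_odd.2 h)]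
    exact Odd.neg_one_pow (Int.natAbs_odd.2 h)

lemma sg_add_one (j : ℤ) : sg (j + 1) = - sg j := by
  rw [sg_eq, sg_eq]
  by_cases h : Even j <;> simp [Int.even_add_one, h]

lemma sg_sub_one (j : ℤ) : sg (j - 1) = - sg j := by
  have := sg_add_one (j - 1)
  have h : j - 1 + 1 = j := by ring
  rw [h] at this; omega

lemma sg_ne_zero (j : ℤ) : sg j ≠ 0 := by
  rw [sg_eq]; by_cases h : Even j <;> simp [h]

/-- finset of partition-multisets of k -/
def mpart (k : ℕ) : Finset (Multiset ℕ) :=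
  (Finset.univ : Finset (Nat.Partition k)).image Nat.Partition.parts

lemma mem_mpart {k : ℕ} {l : Multiset ℕ} :
    l ∈ mpart k ↔ (∀ i ∈ l, i ≠ 0) ∧ l.sum = k := by
  constructor
  · rintro h
    rcases Finset.mem_image.1 h with ⟨P, _, rfl⟩
    exact ⟨fun i hi => (P.parts_pos hi).ne', P.parts_sum⟩
  · rintro ⟨h1, h2⟩
    exact Finset.mem_image.2 ⟨⟨l, fun hi => Nat.pos_of_ne_zero (h1 _ hi), h2⟩,
      Finset.mem_univ _, rfl⟩

lemma card_mpart (k : ℕ) : (mpart k).card = Fintype.card (Nat.Partition k) := by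
  rw [mpart, Finset.card_image_of_injective _ (fun a b h => Nat.Partition.ext h),
    Finset.card_univ]

lemma sum_map_succ (l : Multiset ℕ) : (l.map (· + 1)).sum = l.sum + l.card := by
  induction l using Multiset.induction with
  | empty => simp
  | cons a s ih => simp [ih]; ring

lemma sum_map_pred (l : Multiset ℕ) (h : ∀ i ∈ l, i ≠ 0) :
    (l.map (· - 1)).sum + l.card = l.sum := by
  induction l using Multiset.induction with
  | empty => simp
  | cons a s ih =>
    have ha : a ≠ 0 := h a (Multiset.mem_cons_self a s)
    have ih' := ih (fun i hi => h i (Multiset.mem_cons_of_mem hi))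
    simp only [Multiset.map_cons, Multiset.sum_cons, Multiset.card_cons]
    omega

lemma sum_filter_ne_zero (l : Multiset ℕ) : (l.filter (· ≠ 0)).sum = l.sum := by
  induction l using Multiset.induction with
  | empty => simp
  | cons a s ih =>
    by_cases ha : a = 0
    · subst ha; simp [ih]
    · simp [Multiset.filter_cons, ha, ih]

lemma sup_mem (l : Multiset ℕ) (h : l ≠ 0) : l.sup ∈ l := by
  induction l using Multiset.induction with
  | empty => exact absurd rfl h
  | cons a s ih =>
    rw [Multiset.sup_cons]
    rcases eq_or_ne s 0 with rfl | hs
    · simp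
    · rcases le_total a s.sup with hle | hle
      · rw [sup_eq_right.2 hle]; exact Multiset.mem_cons_of_mem (ih hs)
      · rw [sup_eq_left.2 hle]; exact Multiset.mem_cons_self a s

lemma le_sup_of_mem {l : Multiset ℕ} {a : ℕ} (h : a ∈ l) : a ≤ l.sup :=
  Multiset.le_sup h

lemma eq_replicate_one {l : Multiset ℕ} (hpos : ∀ i ∈ l, i ≠ 0) (hsup : l.sup ≤ 1) :
    l = Multiset.replicate l.card 1 := by
  rw [Multiset.eq_replicate]
  exact ⟨rfl, fun x hx => le_antisymm (le_trans (Multiset.le_sup hx) hsup)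
    (Nat.one_le_iff_ne_zero.2 (hpos x hx))⟩



/-! ## The signed set of pairs -/

def pz (z : ℤ) : ℤ := if 0 ≤ z then (Fintype.card (Nat.Partition z.toNat) : ℤ) else 0

def allm (n : ℕ) : Finset (Multiset ℕ) := (Finset.range (n+1)).biUnion mpart

noncomputable def S (n : ℕ) : Finset (ℤ × Multiset ℕ) :=
  ((Finset.Icc (-(n:ℤ) - 1) ((n:ℤ) + 1)) ×ˢ allm n).filter
    (fun x => (∀ i ∈ x.2, i ≠ 0) ∧ (x.2.sum : ℤ) = (n:ℤ) - pt x.1)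

lemma mem_S {n : ℕ} {x : ℤ × Multiset ℕ} :
    x ∈ S n ↔ (∀ i ∈ x.2, i ≠ 0) ∧ (x.2.sum : ℤ) = (n:ℤ) - pt x.1 := by
  constructor
  · intro h; exact (Finset.mem_filter.1 h).2
  · intro h
    refine Finset.mem_filter.2 ⟨Finset.mem_product.2 ⟨?_, ?_⟩, h⟩
    · have h1 : (0:ℤ) ≤ (x.2.sum:ℤ) := by positivity
      have h2 := natAbs_le_pt x.1
      have h3 := h.2
      rw [Finset.mem_Icc]; omega
    · refine Finset.mem_biUnion.2 ⟨x.2.sum, ?_, mem_mpart.2 ⟨h.1, rfl⟩⟩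
      rw [Finset.mem_range]
      have h1 := pt_nonneg x.1; have h3 := h.2; omega

lemma card_fiber (n : ℕ) (j : ℤ) :
    ((((allm n).filter
      (fun b => (∀ i ∈ b, i ≠ 0) ∧ (b.sum : ℤ) = (n:ℤ) - pt j))).card : ℤ)
      = pz ((n:ℤ) - pt j) := by
  by_cases h : 0 ≤ (n:ℤ) - pt j
  · have : (allm n).filter
        (fun b => (∀ i ∈ b, i ≠ 0) ∧ (b.sum : ℤ) = (n:ℤ) - pt j)
        = mpart ((n:ℤ) - pt j).toNat := by
      ext b
      rw [Finset.mem_filter, mem_mpart]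
      constructor
      · rintro ⟨-, h1, h2⟩
        exact ⟨h1, by omega⟩
      · rintro ⟨h1, h2⟩
        have hsum : (b.sum : ℤ) = (n:ℤ) - pt j := by omega
        have hpt := pt_nonneg j
        refine ⟨Finset.mem_biUnion.2 ⟨b.sum, ?_, mem_mpart.2 ⟨h1, rfl⟩⟩, h1, hsum⟩
        rw [Finset.mem_range]; omega
    rw [this, card_mpart, pz, if_pos h]
  · have : (allm n).filter
        (fun b => (∀ i ∈ b, i ≠ 0) ∧ (b.sum : ℤ) = (n:ℤ) - pt j) = ∅ := by
      ext b
      simp only [Finset.mem_filter, Finset.notMem_empty, iff_false, not_and]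
      intro _ _ h2
      have : (0:ℤ) ≤ (b.sum : ℤ) := by positivity
      omega
    rw [this, pz, if_neg h]; simp

lemma sum_S (n : ℕ) (F : ℤ → ℤ) :
    ∑ x ∈ S n, F x.1 = ∑ j ∈ Finset.Icc (-(n:ℤ)-1) ((n:ℤ)+1), F j * pz ((n:ℤ) - pt j) := by
  rw [S, Finset.sum_filter, Finset.sum_product]
  refine Finset.sum_congr rfl (fun j _ => ?_)
  have h1 : ∑ a ∈ allm n,
      (if (∀ i ∈ (j,a).2, i ≠ 0) ∧ ((j,a).2.sum:ℤ) = (n:ℤ) - pt (j,a).1 then F (j,a).1 else 0)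
      = ∑ _a ∈ (allm n).filter
          (fun b => (∀ i ∈ b, i ≠ 0) ∧ (b.sum:ℤ) = (n:ℤ) - pt j), F j :=
    (Finset.sum_filter _ _).symm
  rw [h1, Finset.sum_const, ← card_fiber n j, nsmul_eq_mul, mul_comm]

/-! ## The Bressoud–Zeilberger style involution -/

def bz (x : ℤ × Multiset ℕ) : ℤ × Multiset ℕ :=
  if x.2 = 0 ∧ x.1 ≤ -1 then
    (x.1 + 1, Multiset.replicate (-3 * x.1 - 1).toNat 1)
  else if x.2.sup ≤ 1 ∧ (Multiset.card x.2 : ℤ) = 2 - 3 * x.1 ∧ x.1 ≤ 0 then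
    (x.1 - 1, 0)
  else if 1 ≤ (Multiset.card x.2 : ℤ) + 3 * x.1 - 2 ∧
      (x.2.sup : ℤ) - 1 ≤ (Multiset.card x.2 : ℤ) + 3 * x.1 - 2 then
    (x.1 - 1, ((Multiset.card x.2 : ℤ) + 3 * x.1 - 2).toNat ::ₘ
      (x.2.map (· - 1)).filter (· ≠ 0))
  else
    (x.1 + 1, (x.2.erase x.2.sup).map (· + 1) +
      Multiset.replicate ((x.2.sup : ℤ) - 3 * x.1 - (Multiset.card x.2 : ℤ)).toNat 1)

lemma bz_fst (x : ℤ × Multiset ℕ) : (bz x).1 = x.1 + 1 ∨ (bz x).1 = x.1 - 1 := by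
  unfold bz; split_ifs <;> simp

lemma bz_ne (x : ℤ × Multiset ℕ) : bz x ≠ x := by
  intro h
  rcases bz_fst x with h1 | h1 <;> rw [h] at h1 <;> omega

lemma sg_bz (x : ℤ × Multiset ℕ) : sg (bz x).1 = - sg x.1 := by
  rcases bz_fst x with h1 | h1 <;> rw [h1]
  · exact sg_add_one _
  · exact sg_sub_one _

lemma bz_eval1 {j : ℤ} {l : Multiset ℕ} (h : l = 0 ∧ j ≤ -1) :
    bz (j, l) = (j + 1, Multiset.replicate (-3 * j - 1).toNat 1) := by
  unfold bz; rw [if_pos h]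

lemma bz_eval2 {j : ℤ} {l : Multiset ℕ} (h1 : ¬(l = 0 ∧ j ≤ -1))
    (h2 : l.sup ≤ 1 ∧ (Multiset.card l : ℤ) = 2 - 3 * j ∧ j ≤ 0) :
    bz (j, l) = (j - 1, 0) := by
  unfold bz; rw [if_neg h1, if_pos h2]

lemma bz_eval3 {j : ℤ} {l : Multiset ℕ} (h1 : ¬(l = 0 ∧ j ≤ -1))
    (h2 : ¬(l.sup ≤ 1 ∧ (Multiset.card l : ℤ) = 2 - 3 * j ∧ j ≤ 0))
    (h3 : 1 ≤ (Multiset.card l : ℤ) + 3 * j - 2 ∧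
      (l.sup : ℤ) - 1 ≤ (Multiset.card l : ℤ) + 3 * j - 2) :
    bz (j, l) = (j - 1, ((Multiset.card l : ℤ) + 3 * j - 2).toNat ::ₘ
      (l.map (· - 1)).filter (· ≠ 0)) := by
  unfold bz; rw [if_neg h1, if_neg h2, if_pos h3]

lemma bz_eval4 {j : ℤ} {l : Multiset ℕ} (h1 : ¬(l = 0 ∧ j ≤ -1))
    (h2 : ¬(l.sup ≤ 1 ∧ (Multiset.card l : ℤ) = 2 - 3 * j ∧ j ≤ 0))
    (h3 : ¬(1 ≤ (Multiset.card l : ℤ) + 3 * j - 2 ∧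
      (l.sup : ℤ) - 1 ≤ (Multiset.card l : ℤ) + 3 * j - 2)) :
    bz (j, l) = (j + 1, (l.erase l.sup).map (· + 1) +
      Multiset.replicate ((l.sup : ℤ) - 3 * j - (Multiset.card l : ℤ)).toNat 1) := by
  unfold bz; rw [if_neg h1, if_neg h2, if_neg h3]

lemma sup_pos_of_ne_zero {l : Multiset ℕ} (hpos : ∀ i ∈ l, i ≠ 0) (h : l ≠ 0) :
    1 ≤ l.sup :=
  Nat.one_le_iff_ne_zero.2 (hpos _ (sup_mem l h))

lemma eq_zero_of_sup_eq_zero {l : Multiset ℕ} (hpos : ∀ i ∈ l, i ≠ 0) (h : l.sup = 0) :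
    l = 0 := by
  by_contra hne
  exact hpos _ (sup_mem l hne) (le_antisymm (h ▸ Multiset.le_sup (sup_mem l hne)) (Nat.zero_le _))

/-- in case 4, under membership and `1 ≤ n`, the `B`-move is valid -/
lemma case4_facts {n : ℕ} (hn : 1 ≤ n) {j : ℤ} {l : Multiset ℕ}
    (hpos : ∀ i ∈ l, i ≠ 0) (hsum : (l.sum : ℤ) = (n:ℤ) - pt j)
    (h1 : ¬(l = 0 ∧ j ≤ -1))
    (h2 : ¬(l.sup ≤ 1 ∧ (Multiset.card l : ℤ) = 2 - 3 * j ∧ j ≤ 0))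
    (h3 : ¬(1 ≤ (Multiset.card l : ℤ) + 3 * j - 2 ∧
      (l.sup : ℤ) - 1 ≤ (Multiset.card l : ℤ) + 3 * j - 2)) :
    1 ≤ l.sup ∧ (Multiset.card l : ℤ) + 3 * j ≤ (l.sup : ℤ) := by
  have hlne : l ≠ 0 := by
    intro hl0
    subst hl0
    simp only [Multiset.sum_zero, Nat.cast_zero] at hsum
    have hj : 0 ≤ j := by
      by_contra hj; push_neg at hj; exact h1 ⟨rfl, by omega⟩
    simp only [Multiset.card_zero, Multiset.sup_zero] at h3
    push_neg at h3
    -- c = 3j - 2 ≥ 1 would make case 3 apply (bot = 0 so (sup:ℤ)-1 = -1 ≤ c)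
    have hc : (0:ℤ) + 3 * j - 2 ≤ 0 := by
      by_contra hc; push_neg at hc
      have := h3 (by omega)
      norm_num at this
      omega
    have hj0 : j = 0 := by omega
    subst hj0
    have : pt 0 = 0 := by unfold pt; norm_num
    omega
  have ht : 1 ≤ l.sup := sup_pos_of_ne_zero hpos hlne
  refine ⟨ht, ?_⟩
  push_neg at h3
  rcases le_or_gt ((Multiset.card l : ℤ) + 3 * j - 2) 0 with hc | hc
  · -- c ≤ 0 : show contradiction unless also t ≥ c + 2
    rcases le_or_gt ((Multiset.card l : ℤ) + 3 * j) (l.sup : ℤ) with h | h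
    · exact h
    · -- t ≤ c + 1 : then t = 1, c = 0, contradiction with ¬C2
      exfalso
      have hc0 : (Multiset.card l : ℤ) + 3 * j - 2 = 0 := by omega
      have ht1 : l.sup ≤ 1 := by omega
      have hcard : (Multiset.card l : ℤ) = 2 - 3 * j := by omega
      exact h2 ⟨ht1, hcard, by
        have hl1 : 0 < Multiset.card l := Multiset.card_pos.2 hlne
        omega⟩
  · have := h3 (by omega)
    omega

lemma sum_eq_card_of_ones {l : Multiset ℕ} (hpos : ∀ i ∈ l, i ≠ 0) (hsup : l.sup ≤ 1) :
    l.sum = Multiset.card l := by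
  conv_lhs => rw [eq_replicate_one hpos hsup]
  simp [Multiset.sum_replicate]

lemma bz_mem {n : ℕ} (hn : 1 ≤ n) {x : ℤ × Multiset ℕ} (hx : x ∈ S n) : bz x ∈ S n := by
  obtain ⟨j, l⟩ := x
  obtain ⟨hpos, hsum⟩ := mem_S.1 hx
  simp only at hpos hsum
  by_cases h1 : l = 0 ∧ j ≤ -1
  · rw [bz_eval1 h1]
    rw [mem_S]
    constructor
    · intro i hi
      rw [Multiset.eq_of_mem_replicate hi]; omega
    · simp only [Multiset.sum_replicate, smul_eq_mul, mul_one]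
      obtain ⟨hl0, hj⟩ := h1
      subst hl0
      simp only [Multiset.sum_zero, Nat.cast_zero] at hsum
      have hp := pt_add_one j
      have : ((-3 * j - 1).toNat : ℤ) = -3 * j - 1 := by omega
      omega
  · by_cases h2 : l.sup ≤ 1 ∧ (Multiset.card l : ℤ) = 2 - 3 * j ∧ j ≤ 0
    · rw [bz_eval2 h1 h2, mem_S]
      refine ⟨by simp, ?_⟩
      simp only [Multiset.sum_zero, Nat.cast_zero]
      have hcard := sum_eq_card_of_ones hpos h2.1
      have hp := pt_sub_one j
      have h21 := h2.2.1
      rw [hcard] at hsum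
      omega
    · by_cases h3 : 1 ≤ (Multiset.card l : ℤ) + 3 * j - 2 ∧
          (l.sup : ℤ) - 1 ≤ (Multiset.card l : ℤ) + 3 * j - 2
      · rw [bz_eval3 h1 h2 h3, mem_S]
        constructor
        · intro i hi
          simp only [Multiset.mem_cons] at hi
          rcases hi with rfl | hi
          · have := h3.1; omega
          · exact (Multiset.mem_filter.1 hi).2
        · simp only [Multiset.sum_cons, Nat.cast_add]
          rw [sum_filter_ne_zero]
          have hmp := sum_map_pred l hpos
          have hp := pt_sub_one j
          have hc : (((Multiset.card l : ℤ) + 3 * j - 2).toNat : ℤ)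
              = (Multiset.card l : ℤ) + 3 * j - 2 := by have := h3.1; omega
          omega
      · obtain ⟨ht, hct⟩ := case4_facts hn hpos hsum h1 h2 h3
        have hlne : l ≠ 0 := by
          intro h; subst h; simp at ht
        have hte : l = l.sup ::ₘ l.erase l.sup := (Multiset.cons_erase (sup_mem l hlne)).symm
        have hsumer : l.sum = l.sup + (l.erase l.sup).sum := by
          conv_lhs => rw [hte]
          simp
        have hcarder : Multiset.card (l.erase l.sup) + 1 = Multiset.card l := by
          conv_rhs => rw [hte]; simp
        rw [bz_eval4 h1 h2 h3, mem_S]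
        constructor
        · intro i hi
          simp only [Multiset.mem_add, Multiset.mem_map] at hi
          rcases hi with ⟨a, _, rfl⟩ | hi
          · omega
          · rw [Multiset.eq_of_mem_replicate hi]; omega
        · simp only [Multiset.sum_add, Multiset.sum_replicate, smul_eq_mul, mul_one]
          rw [sum_map_succ, Nat.cast_add, Nat.cast_add]
          have hp := pt_add_one j
          omega

lemma bz_bz {n : ℕ} (hn : 1 ≤ n) {x : ℤ × Multiset ℕ} (hx : x ∈ S n) : bz (bz x) = x := by
  obtain ⟨j, l⟩ := x
  obtain ⟨hpos, hsum⟩ := mem_S.1 hx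
  simp only at hpos hsum
  by_cases h1 : l = 0 ∧ j ≤ -1
  · rw [bz_eval1 h1]
    set k := (-3 * j - 1).toNat with hk
    have hk2 : 2 ≤ k := by omega
    have hrne : Multiset.replicate k 1 ≠ 0 := by
      intro h
      have := congrArg Multiset.card h
      simp [Multiset.card_replicate] at this
      omega
    rw [bz_eval2 (by tauto) ?hc2]
    case hc2 =>
      refine ⟨Multiset.sup_le.2 (fun b hb => by rw [Multiset.eq_of_mem_replicate hb]), ?_, ?_⟩
      · rw [Multiset.card_replicate]; omega
      · omega
    rw [Prod.mk.injEq]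
    exact ⟨by omega, by rw [h1.1]⟩
  · by_cases h2 : l.sup ≤ 1 ∧ (Multiset.card l : ℤ) = 2 - 3 * j ∧ j ≤ 0
    · rw [bz_eval2 h1 h2]
      rw [bz_eval1 ⟨rfl, by omega⟩]
      rw [Prod.mk.injEq]
      refine ⟨by omega, ?_⟩
      have hrep := eq_replicate_one hpos h2.1
      have hcard : Multiset.card l = (-3 * (j-1) - 1).toNat := by
        have := h2.2.1; omega
      rw [← hcard, ← hrep]
    · by_cases h3 : 1 ≤ (Multiset.card l : ℤ) + 3 * j - 2 ∧
          (l.sup : ℤ) - 1 ≤ (Multiset.card l : ℤ) + 3 * j - 2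
      · -- case 3 : A-move, inverse is B-move
        rw [bz_eval3 h1 h2 h3]
        set c : ℤ := (Multiset.card l : ℤ) + 3 * j - 2 with hcdef
        set f : Multiset ℕ := (l.map (· - 1)).filter (· ≠ 0) with hfdef
        have hc1 : 1 ≤ c := h3.1
        have hcn : (c.toNat : ℤ) = c := by omega
        have hfsup : ∀ b ∈ f, b ≤ c.toNat := by
          intro b hb
          obtain ⟨hb1, -⟩ := Multiset.mem_filter.1 hb
          obtain ⟨i, hi, rfl⟩ := Multiset.mem_map.1 hb1
          have h4 : i ≤ l.sup := Multiset.le_sup hi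
          have h5 := h3.2
          omega
        have hsupm : (c.toNat ::ₘ f).sup = c.toNat := by
          rw [Multiset.sup_cons, sup_eq_left]
          exact Multiset.sup_le.2 hfsup
        have hcardf : Multiset.card f ≤ Multiset.card l := by
          calc Multiset.card f ≤ Multiset.card (l.map (· - 1)) :=
                Multiset.card_le_card (Multiset.filter_le _ _)
            _ = Multiset.card l := Multiset.card_map _ _
        have hcardm : Multiset.card (c.toNat ::ₘ f) = Multiset.card f + 1 :=
          Multiset.card_cons _ _
        rw [bz_eval4 ?nc1 ?nc2 ?nc3]
        case nc1 =>
          rintro ⟨habs, -⟩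
          exact Multiset.cons_ne_zero habs
        case nc2 =>
          rintro ⟨ha1, ha2, -⟩
          rw [hsupm] at ha1
          rw [hcardm] at ha2
          push_cast at ha2
          omega
        case nc3 =>
          rintro ⟨-, ha2⟩
          rw [hsupm, hcardm] at ha2
          push_cast at ha2
          omega
        -- now compute the B-move applied to (j-1, c.toNat ::ₘ f)
        rw [Prod.mk.injEq]
        refine ⟨by omega, ?_⟩
        rw [hsupm, Multiset.erase_cons_head, hcardm]
        -- pad count
        have hpad : ((c.toNat : ℤ) - 3 * (j-1) - ((Multiset.card f + 1 : ℕ) : ℤ)).toNat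
            = Multiset.card l - Multiset.card f := by
          push_cast
          omega
        rw [hpad]
        -- the key multiset identity
        have hfg : f = (l.filter (fun i => i - 1 ≠ 0)).map (· - 1) := by
          rw [hfdef, Multiset.filter_map]
          rfl
        have hmap1 : f.map (· + 1) = l.filter (fun i => i - 1 ≠ 0) := by
          rw [hfg, Multiset.map_map]
          have : ∀ i ∈ l.filter (fun i => i - 1 ≠ 0), ((· + 1) ∘ (· - 1)) i = id i := by
            intro i hi
            have := (Multiset.mem_filter.1 hi).2
            simp only [Function.comp_apply, id_eq]
            omega
          rw [Multiset.map_congr rfl this, Multiset.map_id]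
        have hones : l.filter (fun i => ¬(i - 1 ≠ 0))
            = Multiset.replicate (Multiset.card (l.filter (fun i => ¬(i - 1 ≠ 0)))) 1 := by
          rw [Multiset.eq_replicate]
          refine ⟨rfl, fun b hb => ?_⟩
          obtain ⟨hb1, hb2⟩ := Multiset.mem_filter.1 hb
          have := hpos b hb1
          omega
        have hsplit : l.filter (fun i => i - 1 ≠ 0) + l.filter (fun i => ¬(i - 1 ≠ 0)) = l :=
          Multiset.filter_add_not _ _
        have hcards : Multiset.card f + Multiset.card (l.filter (fun i => ¬(i - 1 ≠ 0)))
            = Multiset.card l := by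
          have := congrArg Multiset.card hsplit
          rw [Multiset.card_add] at this
          rw [hfg, Multiset.card_map]
          exact this
        rw [hmap1]
        have hcount : Multiset.card l - Multiset.card f
            = Multiset.card (l.filter (fun i => ¬(i - 1 ≠ 0))) := by omega
        rw [hcount, ← hones]
        exact hsplit
      · -- case 4 : B-move, inverse is A-move
        obtain ⟨ht, hct⟩ := case4_facts hn hpos hsum h1 h2 h3
        have hlne : l ≠ 0 := by intro h; subst h; simp at ht
        have htmem : l.sup ∈ l := sup_mem l hlne
        have hlcard : 1 ≤ Multiset.card l := by
          rw [Nat.one_le_iff_ne_zero]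
          simp [hlne]
        rw [bz_eval4 h1 h2 h3]
        set t : ℕ := l.sup with htdef
        set pad : ℕ := ((t : ℤ) - 3 * j - (Multiset.card l : ℤ)).toNat with hpaddef
        have hpadz : (pad : ℤ) = (t : ℤ) - 3 * j - (Multiset.card l : ℤ) := by
          rw [hpaddef]; omega
        set w : Multiset ℕ := (l.erase t).map (· + 1) + Multiset.replicate pad 1 with hwdef
        have hcarde : Multiset.card l = Multiset.card (l.erase t) + 1 := by
          conv_lhs => rw [← Multiset.cons_erase htmem]
          rw [Multiset.card_cons]
        have hcardw : (Multiset.card w : ℤ) = (t : ℤ) - 3 * j - 1 := by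
          rw [hwdef, Multiset.card_add, Multiset.card_map, Multiset.card_replicate]
          omega
        have hwsup : ∀ b ∈ w, b ≤ t + 1 := by
          intro b hb
          rcases Multiset.mem_add.1 hb with hb | hb
          · obtain ⟨i, hi, rfl⟩ := Multiset.mem_map.1 hb
            have : i ≤ t := Multiset.le_sup (Multiset.mem_of_mem_erase hi)
            omega
          · rw [Multiset.eq_of_mem_replicate hb]; omega
        rw [bz_eval3 ?mc1 ?mc2 ?mc3]
        case mc1 =>
          rintro ⟨habs, hj⟩
          have := congrArg Multiset.card habs
          simp only [Multiset.card_zero] at this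
          rw [this] at hcardw
          simp at hcardw
          omega
        case mc2 =>
          rintro ⟨-, ha2, -⟩
          rw [hcardw] at ha2
          omega
        case mc3 =>
          have hsw : Multiset.sup w ≤ t + 1 := Multiset.sup_le.2 hwsup
          constructor
          · rw [hcardw]; omega
          · rw [hcardw]; omega
        rw [Prod.mk.injEq]
        refine ⟨by omega, ?_⟩
        have hcn : ((Multiset.card w : ℤ) + 3 * (j + 1) - 2).toNat = t := by
          rw [hcardw]; omega
        rw [hcn]
        -- compute (w.map (· - 1)).filter (· ≠ 0) = l.erase t
        have hmapw : w.map (· - 1) = l.erase t + Multiset.replicate pad 0 := by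
          rw [hwdef, Multiset.map_add, Multiset.map_map, Multiset.map_replicate]
          congr 1
          have : ∀ i ∈ l.erase t, ((· - 1) ∘ (· + 1)) i = id i := by
            intro i _; simp
          rw [Multiset.map_congr rfl this, Multiset.map_id]
        rw [hmapw, Multiset.filter_add]
        have hf1 : (l.erase t).filter (· ≠ 0) = l.erase t := by
          rw [Multiset.filter_eq_self]
          intro b hb
          exact hpos b (Multiset.mem_of_mem_erase hb)
        have hf2 : (Multiset.replicate pad (0:ℕ)).filter (· ≠ 0) = 0 := by
          rw [Multiset.filter_eq_nil]
          intro b hb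
          rw [Multiset.eq_of_mem_replicate hb]
          simp
        rw [hf1, hf2, add_zero]
        exact Multiset.cons_erase htmem

/-! ## Euler's pentagonal recurrence -/

lemma euler_pos (n : ℕ) (hn : 1 ≤ n) :
    ∑ j ∈ Finset.Icc (-(n:ℤ)-1) ((n:ℤ)+1), sg j * pz ((n:ℤ) - pt j) = 0 := by
  rw [← sum_S n sg]
  exact Finset.sum_involution (fun x _ => bz x)
    (fun x hx => by rw [sg_bz]; ring)
    (fun x hx _ => bz_ne x)
    (fun x hx => bz_mem hn hx)
    (fun x hx => bz_bz hn hx)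

lemma pt_zero : pt 0 = 0 := by unfold pt; norm_num
lemma pt_one : pt 1 = 1 := by unfold pt; norm_num
lemma pt_neg_one : pt (-1) = 2 := by unfold pt; norm_num

lemma euler (n : ℕ) :
    ∑ j ∈ Finset.Icc (-(n:ℤ)-1) ((n:ℤ)+1), sg j * pz ((n:ℤ) - pt j)
      = if n = 0 then 1 else 0 := by
  rcases Nat.eq_zero_or_pos n with rfl | hn
  · rw [if_pos rfl]
    have hIcc : Finset.Icc (-(0:ℕ)-1 : ℤ) ((0:ℕ)+1) = {-1, 0, 1} := by decide
    rw [hIcc]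
    rw [Finset.sum_insert (by decide), Finset.sum_insert (by decide),
      Finset.sum_singleton]
    rw [pt_zero, pt_one, pt_neg_one]
    have h1 : pz ((0:ℕ) - (2:ℤ)) = 0 := by rw [pz, if_neg (by norm_num)]
    have h2 : pz ((0:ℕ) - (0:ℤ)) = 1 := by
      rw [pz, if_pos (by norm_num)]
      norm_num
    have h3 : pz ((0:ℕ) - (1:ℤ)) = 0 := by rw [pz, if_neg (by norm_num)]
    rw [h1, h2, h3]
    simp [sg]
  · rw [if_neg (by omega), euler_pos n hn]

/-! ## The pentagonal indicator sequence -/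

noncomputable def e (m : ℕ) : ℤ :=
  ∑ j ∈ Finset.Icc (-(m:ℤ)-1) ((m:ℤ)+1), if pt j = (m:ℤ) then sg j else 0

lemma e_pt {j : ℤ} {m : ℕ} (h : pt j = (m:ℤ)) : e m = sg j := by
  rw [e, Finset.sum_eq_single j]
  · rw [if_pos h]
  · intro j' _ hj'
    rw [if_neg]
    intro habs
    exact hj' (pt_inj (by rw [habs, h]))
  · intro hj
    exfalso
    have h2 := natAbs_le_pt j
    rw [Finset.mem_Icc] at hj
    omega

lemma e_zero {m : ℕ} (h : ∀ j : ℤ, pt j ≠ (m:ℤ)) : e m = 0 := by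
  rw [e]
  exact Finset.sum_eq_zero (fun j _ => if_neg (h j))

/-- extending the inner index set of `e m` -/
lemma e_eq_big {m n : ℕ} (hmn : m ≤ n) :
    e m = ∑ j ∈ Finset.Icc (-(n:ℤ)-1) ((n:ℤ)+1), if pt j = (m:ℤ) then sg j else 0 := by
  rw [e]
  refine Finset.sum_subset ?_ ?_
  · intro j hj
    rw [Finset.mem_Icc] at hj ⊢
    omega
  · intro j _ hj
    rw [if_neg]
    intro habs
    have h2 := natAbs_le_pt j
    rw [Finset.mem_Icc] at hj
    omega

/-- key transfer lemma: convolution with `e` equals the pentagonal-indexed sum -/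
lemma transfer (f : ℕ → ℤ) (n : ℕ) :
    ∑ m ∈ Finset.range (n+1), e m * f (n - m)
      = ∑ j ∈ Finset.Icc (-(n:ℤ)-1) ((n:ℤ)+1),
          sg j * (if 0 ≤ (n:ℤ) - pt j then f ((n:ℤ) - pt j).toNat else 0) := by
  have hstep : ∀ m ∈ Finset.range (n+1), e m * f (n - m)
      = ∑ j ∈ Finset.Icc (-(n:ℤ)-1) ((n:ℤ)+1),
          (if pt j = (m:ℤ) then sg j else 0) * f (n - m) := by
    intro m hm
    rw [Finset.mem_range] at hm
    rw [e_eq_big (by omega : m ≤ n), Finset.sum_mul]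
  rw [Finset.sum_congr rfl hstep, Finset.sum_comm]
  refine Finset.sum_congr rfl (fun j _ => ?_)
  by_cases hle : 0 ≤ (n:ℤ) - pt j
  · rw [if_pos hle]
    have hptn : (pt j).toNat ≤ n := by
      have := pt_nonneg j; omega
    rw [Finset.sum_eq_single ((pt j).toNat)]
    · rw [if_pos (by have := pt_nonneg j; omega)]
      have harg : n - (pt j).toNat = ((n:ℤ) - pt j).toNat := by
        have := pt_nonneg j; omega
      rw [harg]
    · intro m _ hm
      rw [if_neg, zero_mul]
      intro habs
      exact hm (by have := pt_nonneg j; omega)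
    · intro habs
      exfalso
      exact habs (Finset.mem_range.2 (by omega))
  · rw [if_neg hle, mul_zero]
    refine Finset.sum_eq_zero (fun m hm => ?_)
    rw [Finset.mem_range] at hm
    rw [if_neg, zero_mul]
    intro habs
    omega

/-! ## The splitting of a partition into 6-regular and 6-divisible parts -/

def p6 (k : ℕ) : ℤ := if 6 ∣ k then (Fintype.card (Nat.Partition (k/6)) : ℤ) else 0

def regf (m : ℕ) : Finset (Multiset ℕ) := (mpart m).filter (fun l => ∀ i ∈ l, ¬ 6 ∣ i)
def divf (k : ℕ) : Finset (Multiset ℕ) := (mpart k).filter (fun l => ∀ i ∈ l, 6 ∣ i)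

lemma card_regf (m : ℕ) : ((regf m).card : ℤ) = (b6 m : ℤ) := by
  rw [b6, Fintype.card_subtype]
  congr 1
  rw [regf, mpart, Finset.filter_image,
    Finset.card_image_of_injective _ (fun a b h => Nat.Partition.ext h)]

lemma sum_map_six (g : Multiset ℕ) : (g.map (fun i => 6*i)).sum = 6 * g.sum := by
  induction g using Multiset.induction with
  | empty => simp
  | cons a s ih => simp [ih]; ring

lemma divf_empty {k : ℕ} (h : ¬ 6 ∣ k) : divf k = ∅ := by
  ext l
  simp only [divf, Finset.mem_filter, mem_mpart, Finset.notMem_empty, iff_false, not_and]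
  rintro ⟨-, hsum⟩ hdvd
  exact h (hsum ▸ Multiset.dvd_sum hdvd)

lemma divf_eq_image (k' : ℕ) :
    divf (6*k') = (mpart k').image (Multiset.map (fun i => 6*i)) := by
  ext l
  simp only [divf, Finset.mem_filter, mem_mpart, Finset.mem_image]
  constructor
  · rintro ⟨⟨hpos, hsum⟩, hdvd⟩
    refine ⟨l.map (fun i => i/6), ⟨?_, ?_⟩, ?_⟩
    · intro i hi
      obtain ⟨a, ha, rfl⟩ := Multiset.mem_map.1 hi
      have h6 := hdvd a ha
      have := hpos a ha
      omega
    · have hmm : (l.map (fun i => i/6)).map (fun i => 6*i) = l := by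
        rw [Multiset.map_map]
        have : ∀ a ∈ l, ((fun i => 6*i) ∘ (fun i => i/6)) a = id a := by
          intro a ha
          have h6 := hdvd a ha
          simp only [Function.comp_apply, id_eq]
          omega
        rw [Multiset.map_congr rfl this, Multiset.map_id]
      have := sum_map_six (l.map (fun i => i/6))
      rw [hmm] at this
      omega
    · rw [Multiset.map_map]
      have : ∀ a ∈ l, ((fun i => 6*i) ∘ (fun i => i/6)) a = id a := by
        intro a ha
        have h6 := hdvd a ha
        simp only [Function.comp_apply, id_eq]
        omega
      rw [Multiset.map_congr rfl this, Multiset.map_id]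
  · rintro ⟨g, ⟨hpos, hsum⟩, rfl⟩
    refine ⟨⟨?_, ?_⟩, ?_⟩
    · intro i hi
      obtain ⟨a, ha, rfl⟩ := Multiset.mem_map.1 hi
      have := hpos a ha
      omega
    · rw [sum_map_six, hsum]
    · intro i hi
      obtain ⟨a, ha, rfl⟩ := Multiset.mem_map.1 hi
      exact ⟨a, rfl⟩

lemma card_divf (k : ℕ) : ((divf k).card : ℤ) = p6 k := by
  by_cases h : 6 ∣ k
  · obtain ⟨k', rfl⟩ := h
    rw [divf_eq_image, Finset.card_image_of_injective _
        (Multiset.map_injective (fun a b h => by omega)),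
      card_mpart, p6, if_pos ⟨k', rfl⟩, Nat.mul_div_cancel_left k' (by norm_num : 0 < 6)]
  · rw [divf_empty h, p6, if_neg h]
    simp

lemma recover_reg {a b : Multiset ℕ} (ha : ∀ i ∈ a, ¬ 6 ∣ i) (hb : ∀ i ∈ b, 6 ∣ i) :
    (a+b).filter (fun i => ¬ 6 ∣ i) = a := by
  rw [Multiset.filter_add, Multiset.filter_eq_self.2 ha, Multiset.filter_eq_nil.2 ?_, add_zero]
  intro i hi
  exact not_not.2 (hb i hi)

lemma recover_div {a b : Multiset ℕ} (ha : ∀ i ∈ a, ¬ 6 ∣ i) (hb : ∀ i ∈ b, 6 ∣ i) :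
    (a+b).filter (fun i => 6 ∣ i) = b := by
  rw [Multiset.filter_add, Multiset.filter_eq_self.2 hb, Multiset.filter_eq_nil.2 ha, zero_add]

lemma mpart_decomp (n : ℕ) :
    mpart n = (Finset.range (n+1)).biUnion
      (fun m => ((regf m) ×ˢ (divf (n-m))).image (fun pr => pr.1 + pr.2)) := by
  ext l
  simp only [Finset.mem_biUnion, Finset.mem_range, Finset.mem_image, Finset.mem_product,
    mem_mpart]
  constructor
  · rintro ⟨hpos, hsum⟩
    set a := l.filter (fun i => ¬ 6 ∣ i) with hadef
    set b := l.filter (fun i => 6 ∣ i) with hbdef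
    have hab : b + a = l := Multiset.filter_add_not _ _
    have hsum2 : b.sum + a.sum = n := by
      rw [← hsum, ← Multiset.sum_add, hab]
    refine ⟨a.sum, by omega, (a, b), ⟨?_, ?_⟩, by rw [add_comm, hab]⟩
    · rw [regf, Finset.mem_filter, mem_mpart]
      exact ⟨⟨fun i hi => hpos i (Multiset.mem_of_mem_filter hi), rfl⟩,
        fun i hi => (Multiset.mem_filter.1 hi).2⟩
    · rw [divf, Finset.mem_filter, mem_mpart]
      refine ⟨⟨fun i hi => hpos i (Multiset.mem_of_mem_filter hi), by dsimp only; omega⟩,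
        fun i hi => (Multiset.mem_filter.1 hi).2⟩
  · rintro ⟨m, hm, ⟨a, b⟩, ⟨hareg, hbdiv⟩, rfl⟩
    rw [regf, Finset.mem_filter, mem_mpart] at hareg
    rw [divf, Finset.mem_filter, mem_mpart] at hbdiv
    constructor
    · intro i hi
      rcases Multiset.mem_add.1 hi with hi | hi
      · exact hareg.1.1 i hi
      · exact hbdiv.1.1 i hi
    · rw [Multiset.sum_add, hareg.1.2, hbdiv.1.2]
      omega

lemma split_card (n : ℕ) : ((mpart n).card : ℤ)
    = ∑ m ∈ Finset.range (n+1), ((regf m).card : ℤ) * ((divf (n-m)).card : ℤ) := by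
  rw [mpart_decomp n, Finset.card_biUnion ?disj]
  case disj =>
    intro m hm m' hm' hne
    dsimp only [Function.onFun]
    rw [Finset.disjoint_left]
    rintro l hl hl'
    obtain ⟨⟨a, b⟩, hab, rfl⟩ := Finset.mem_image.1 hl
    obtain ⟨⟨a', b'⟩, hab', heq⟩ := Finset.mem_image.1 hl'
    rw [Finset.mem_product] at hab hab'
    obtain ⟨ha, hb⟩ := hab
    obtain ⟨ha', hb'⟩ := hab'
    rw [regf, Finset.mem_filter, mem_mpart] at ha ha'
    rw [divf, Finset.mem_filter, mem_mpart] at hb hb'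
    dsimp only at heq ha hb ha' hb'
    have h1 : (a + b).filter (fun i => ¬ 6 ∣ i) = a := recover_reg ha.2 hb.2
    have h2 : (a' + b').filter (fun i => ¬ 6 ∣ i) = a' := recover_reg ha'.2 hb'.2
    rw [heq] at h2
    apply hne
    rw [← ha.1.2, ← ha'.1.2, ← h1, ← h2]
  push_cast
  refine Finset.sum_congr rfl (fun m _ => ?_)
  rw [Finset.card_image_of_injOn ?inj, Finset.card_product]
  · push_cast; ring
  case inj =>
    rintro ⟨a, b⟩ hab ⟨a', b'⟩ hab' heq
    simp only [Finset.mem_coe, Finset.mem_product] at hab hab'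
    obtain ⟨ha, hb⟩ := hab
    obtain ⟨ha', hb'⟩ := hab'
    rw [regf, Finset.mem_filter, mem_mpart] at ha ha'
    rw [divf, Finset.mem_filter, mem_mpart] at hb hb'
    dsimp only at heq ha hb ha' hb'
    have h1 : (a + b).filter (fun i => ¬ 6 ∣ i) = a := recover_reg ha.2 hb.2
    have h2 : (a' + b').filter (fun i => ¬ 6 ∣ i) = a' := recover_reg ha'.2 hb'.2
    have h3 : (a + b).filter (fun i => 6 ∣ i) = b := recover_div ha.2 hb.2
    have h4 : (a' + b').filter (fun i => 6 ∣ i) = b' := recover_div ha'.2 hb'.2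
    rw [heq] at h1 h3
    rw [Prod.mk.injEq]
    exact ⟨h1 ▸ h2.symm ▸ rfl, h3 ▸ h4.symm ▸ rfl⟩

lemma split (n : ℕ) : (Fintype.card (Nat.Partition n) : ℤ)
    = ∑ m ∈ Finset.range (n+1), (b6 m : ℤ) * p6 (n-m) := by
  rw [← card_mpart, split_card n]
  refine Finset.sum_congr rfl (fun m _ => ?_)
  rw [card_regf, card_divf]

/-! ## Power series algebra -/

noncomputable def e6 (k : ℕ) : ℤ := if 6 ∣ k then e (k/6) else 0

noncomputable def Pps : PowerSeries ℤ :=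
  PowerSeries.mk fun k => (Fintype.card (Nat.Partition k) : ℤ)
noncomputable def Bps : PowerSeries ℤ := PowerSeries.mk fun k => (b6 k : ℤ)
noncomputable def P6ps : PowerSeries ℤ := PowerSeries.mk p6
noncomputable def Eps : PowerSeries ℤ := PowerSeries.mk e
noncomputable def E6ps : PowerSeries ℤ := PowerSeries.mk e6

lemma conv_ep (n : ℕ) :
    ∑ m ∈ Finset.range (n+1), e m * (Fintype.card (Nat.Partition (n-m)) : ℤ)
      = if n = 0 then 1 else 0 := by
  rw [transfer (fun k => (Fintype.card (Nat.Partition k) : ℤ)) n, ← euler n]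
  exact Finset.sum_congr rfl (fun j _ => rfl)

lemma EP_one : Eps * Pps = 1 := by
  ext n
  rw [PowerSeries.coeff_mul, Finset.Nat.sum_antidiagonal_eq_sum_range_succ_mk]
  simp only [Eps, Pps, PowerSeries.coeff_mk]
  rw [conv_ep n, PowerSeries.coeff_one]

lemma P_split : Pps = Bps * P6ps := by
  ext n
  rw [PowerSeries.coeff_mul, Finset.Nat.sum_antidiagonal_eq_sum_range_succ_mk]
  simp only [Pps, Bps, P6ps, PowerSeries.coeff_mk]
  exact split n

lemma E6P6_one : E6ps * P6ps = 1 := by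
  ext n
  rw [PowerSeries.coeff_mul, Finset.Nat.sum_antidiagonal_eq_sum_range_succ_mk]
  simp only [E6ps, P6ps, PowerSeries.coeff_mk]
  rw [PowerSeries.coeff_one]
  by_cases h6 : 6 ∣ n
  · obtain ⟨n', rfl⟩ := h6
    have hsub : (Finset.range (n'+1)).image (fun m' => 6*m') ⊆ Finset.range (6*n'+1) := by
      intro m hm
      obtain ⟨m', hm', rfl⟩ := Finset.mem_image.1 hm
      rw [Finset.mem_range] at hm' ⊢
      omega
    rw [← Finset.sum_subset hsub ?hzero]
    case hzero =>
      intro m hm hnot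
      rw [Finset.mem_range] at hm
      by_cases hd : 6 ∣ m
      · exfalso
        obtain ⟨m', rfl⟩ := hd
        exact hnot (Finset.mem_image.2 ⟨m', Finset.mem_range.2 (by omega), rfl⟩)
      · rw [e6, if_neg hd, zero_mul]
    rw [Finset.sum_image (fun a _ b _ h => by omega)]
    have hcong : ∀ m' ∈ Finset.range (n'+1),
        e6 (6*m') * p6 (6*n' - 6*m')
          = e m' * (Fintype.card (Nat.Partition (n'-m')) : ℤ) := by
      intro m' hm'
      rw [Finset.mem_range] at hm'
      have h1 : e6 (6*m') = e m' := by
        rw [e6, if_pos ⟨m', rfl⟩, Nat.mul_div_cancel_left m' (by norm_num : 0 < 6)]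
      have h2 : 6*n' - 6*m' = 6*(n'-m') := by omega
      have h3 : p6 (6*(n'-m')) = (Fintype.card (Nat.Partition (n'-m')) : ℤ) := by
        rw [p6, if_pos ⟨n'-m', rfl⟩, Nat.mul_div_cancel_left _ (by norm_num : 0 < 6)]
      rw [h1, h2, h3]
    rw [Finset.sum_congr rfl hcong, conv_ep n']
    by_cases h0 : n' = 0
    · subst h0; norm_num
    · rw [if_neg h0, if_neg (by omega)]
  · have hn0 : n ≠ 0 := by rintro rfl; exact h6 ⟨0, rfl⟩
    rw [if_neg hn0]
    refine Finset.sum_eq_zero (fun m hm => ?_)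
    rw [Finset.mem_range] at hm
    by_cases hd : 6 ∣ m
    · have hnd : ¬ 6 ∣ (n - m) := by
        intro habs
        exact h6 (by omega)
      rw [p6, if_neg hnd, mul_zero]
    · rw [e6, if_neg hd, zero_mul]

lemma EB_E6 : Eps * Bps = E6ps := by
  calc Eps * Bps = Eps * Bps * (E6ps * P6ps) := by rw [E6P6_one, mul_one]
    _ = Eps * (Bps * P6ps) * E6ps := by ring
    _ = Eps * Pps * E6ps := by rw [← P_split]
    _ = E6ps := by rw [EP_one, one_mul]

lemma conv_eb (n : ℕ) :
    ∑ m ∈ Finset.range (n+1), e m * (b6 (n-m) : ℤ) = e6 n := by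
  have h := congrArg (fun φ => (PowerSeries.coeff n) φ) EB_E6
  rw [PowerSeries.coeff_mul, Finset.Nat.sum_antidiagonal_eq_sum_range_succ_mk] at h
  simp only [Eps, Bps, E6ps, PowerSeries.coeff_mk] at h
  exact h

lemma main_sum (n : ℕ) :
    ∑ j ∈ Finset.Icc (-(n : ℤ) - 1) ((n : ℤ) + 1),
        (-1) ^ j.natAbs * b6z ((n : ℤ) - j * (3 * j - 1) / 2) = e6 n := by
  rw [← conv_eb n, transfer (fun k => (b6 k : ℤ)) n]
  exact Finset.sum_congr rfl (fun j _ => rfl)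

end Aux6

theorem stmt6 (n : ℕ) :
    (∀ k : ℤ, (n : ℤ) = 3 * k * (3 * k - 1) →
      ∑ j ∈ Finset.Icc (-(n : ℤ) - 1) ((n : ℤ) + 1),
        (-1) ^ j.natAbs * b6z ((n : ℤ) - j * (3 * j - 1) / 2) = (-1) ^ k.natAbs) ∧
    ((¬ ∃ k : ℤ, (n : ℤ) = 3 * k * (3 * k - 1)) →
      ∑ j ∈ Finset.Icc (-(n : ℤ) - 1) ((n : ℤ) + 1),
        (-1) ^ j.natAbs * b6z ((n : ℤ) - j * (3 * j - 1) / 2) = 0) := by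
  constructor
  · intro k hk
    rw [Aux6.main_sum n]
    have h2 := Aux6.two_pt k
    have h6 : (n:ℤ) = 6 * Aux6.pt k := by rw [hk]; linear_combination (-3) * h2
    have hpt := Aux6.pt_nonneg k
    have h6n : 6 ∣ n := by
      have : (6:ℤ) ∣ (n:ℤ) := ⟨Aux6.pt k, h6⟩
      exact_mod_cast this
    have hdiv : Aux6.pt k = ((n / 6 : ℕ) : ℤ) := by omega
    rw [Aux6.e6, if_pos h6n, Aux6.e_pt hdiv]
    rfl
  · intro h
    rw [Aux6.main_sum n, Aux6.e6]
    by_cases h6 : 6 ∣ n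
    · rw [if_pos h6]
      apply Aux6.e_zero
      intro j habs
      refine h ⟨j, ?_⟩
      have h2 := Aux6.two_pt j
      have h6j : (n:ℤ) = 6 * Aux6.pt j := by
        have hx : ((n / 6 : ℕ) : ℤ) = Aux6.pt j := habs.symm
        omega
      linear_combination h6j + 3 * h2
    · rw [if_neg h6]
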